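/- Let f(i) = sum_{k=i}^infinity gamma_k^2 where gamma is a positive square-summable sequence that is non-increasing from some index N onward, and let the chain be uniformly bounded with bound d with drifts gamma_i. Then for all i >= N, the Lyapunov increment Delta f(i) = sum_j p_{ij}(f(j) - f(i)) satisfies Delta f(i) <= -gamma_i^3 + d * max_{|k-i| <= d} |gamma_k^2 - gamma_i^2|. -/

import Mathlib

open scoped ENNReal BigOperators
open Filter

/-- A discrete-time Markov chain on the nonnegative integers, given by its
row-stochastic transition matrix. -/
structure MarkovChain where
  p : ℕ → ℕ → ℝ≥0∞
  row_sum : ∀ i, ∑' j, p i j = 1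

namespace MarkovChain

/-- `n`-step transition probabilities. -/
noncomputable def step (M : MarkovChain) : ℕ → ℕ → ℕ → ℝ≥0∞
  | 0, i, j => if i = j then 1 else 0
  | (n+1), i, j => ∑' k, M.p i k * M.step n k j

/-- Irreducibility: every state reaches every other state with positive probability. -/
def Irreducible (M : MarkovChain) : Prop := ∀ i j, ∃ n, 0 < M.step n i j

/-- Probability, starting from `j`, that the chain reaches state `i` for the first
time at time `n` (time `0` counts iff `j = i`). -/
noncomputable def hitAt (M : MarkovChain) (i : ℕ) : ℕ → ℕ → ℝ≥0∞
  | 0, j => if j = i then 1 else 0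
  | (n+1), j => if j = i then 0 else ∑' k, M.p j k * M.hitAt i n k

/-- Probability that the first return to `i` occurs at time `n + 1`. -/
noncomputable def firstReturn (M : MarkovChain) (i n : ℕ) : ℝ≥0∞ :=
  ∑' k, M.p i k * M.hitAt i n k

/-- The chain is recurrent: return to each state is almost sure. -/
def Recurrent (M : MarkovChain) : Prop := ∀ i, ∑' n, M.firstReturn i n = 1

/-- The chain is positive recurrent: recurrent with finite expected return times. -/
def PositiveRecurrent (M : MarkovChain) : Prop :=
  M.Recurrent ∧ ∀ i, ∑' n : ℕ, ((n : ℝ≥0∞) + 1) * M.firstReturn i n < ⊤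

/-- Null recurrent: recurrent but not positive recurrent. -/
def NullRecurrent (M : MarkovChain) : Prop := M.Recurrent ∧ ¬ M.PositiveRecurrent

/-- The chain is transient: return to each state happens with probability `< 1`. -/
def Transient (M : MarkovChain) : Prop := ∀ i, ∑' n, M.firstReturn i n < 1

/-- Mean drift at state `i`. -/
noncomputable def drift (M : MarkovChain) (i : ℕ) : ℝ :=
  ∑' j, (M.p i j).toReal * ((j : ℝ) - i)

/-- The mean drift at `i` is finite (well-defined). -/
def DriftFinite (M : MarkovChain) (i : ℕ) : Prop :=
  Summable fun j => (M.p i j).toReal * ((j : ℝ) - i)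

/-- Second-moment drift at state `i`. -/
noncomputable def secondMoment (M : MarkovChain) (i : ℕ) : ℝ :=
  ∑' j, (M.p i j).toReal * ((j : ℝ) - i) ^ 2

/-- Downward uniformly bounded with bound `k`: no downward jumps longer than `k`. -/
def DownwardBounded (M : MarkovChain) (k : ℕ) : Prop :=
  ∀ i j, j + k < i → M.p i j = 0

/-- Uniformly bounded with bound `d`: no jumps longer than `d`. -/
def UniformlyBounded (M : MarkovChain) (d : ℕ) : Prop :=
  ∀ i j : ℕ, (d : ℤ) < |(i : ℤ) - j| → M.p i j = 0

end MarkovChain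

lemma summable_tail (γ : ℕ → ℝ) (hsq : Summable fun k => γ k ^ 2) (b : ℕ) :
    Summable fun k => if b ≤ k then γ k ^ 2 else 0 := by
  have h := hsq.indicator {k | b ≤ k}
  convert h using 2 with k
  · rfl
  simp [Set.indicator_apply]

lemma Fsplit (γ : ℕ → ℝ) (hsq : Summable fun k => γ k ^ 2) {a b : ℕ} (hab : a ≤ b) :
    (∑' k, if a ≤ k then γ k ^ 2 else 0)
      = (∑ k ∈ Finset.Ico a b, γ k ^ 2) + ∑' k, if b ≤ k then γ k ^ 2 else 0 := by
  have hpt : ∀ k, (if a ≤ k then γ k ^ 2 else 0)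
      = (if k ∈ Finset.Ico a b then γ k ^ 2 else 0) + (if b ≤ k then γ k ^ 2 else 0) := by
    intro k
    by_cases h : k ∈ Finset.Ico a b <;> by_cases h' : a ≤ k <;> by_cases h'' : b ≤ k <;>
      simp_all [Finset.mem_Ico] <;> omega
  have h1 : Summable fun k => if k ∈ Finset.Ico a b then γ k ^ 2 else 0 :=
    summable_of_ne_finset_zero (s := Finset.Ico a b) (fun k hk => if_neg hk)
  have h2 := summable_tail γ hsq b
  calc (∑' k, if a ≤ k then γ k ^ 2 else 0)
      = ∑' k, ((if k ∈ Finset.Ico a b then γ k ^ 2 else 0) + (if b ≤ k then γ k ^ 2 else 0)) :=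
        tsum_congr hpt
    _ = (∑' k, if k ∈ Finset.Ico a b then γ k ^ 2 else 0) + ∑' k, if b ≤ k then γ k ^ 2 else 0 :=
        Summable.tsum_add h1 h2
    _ = _ := by
        congr 1
        rw [tsum_eq_sum (s := Finset.Ico a b) (fun k hk => if_neg hk)]
        exact Finset.sum_congr rfl fun k hk => if_pos hk

lemma Fdiff (γ : ℕ → ℝ) (hsq : Summable fun k => γ k ^ 2) (i j : ℕ) :
    (∑' k, if j ≤ k then γ k ^ 2 else 0) - (∑' k, if i ≤ k then γ k ^ 2 else 0)
      = (∑ k ∈ Finset.Ico j i, γ k ^ 2) - ∑ k ∈ Finset.Ico i j, γ k ^ 2 := by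
  rcases le_total j i with h | h
  · rw [Fsplit γ hsq h, Finset.Ico_eq_empty (show ¬ i < j by omega)]
    simp
  · rw [Fsplit γ hsq h, Finset.Ico_eq_empty (show ¬ j < i by omega)]
    simp

/-- the key increment bound for the Lyapunov function
`f i = ∑_{k ≥ i} γ_k²`. -/
theorem stmt9 (M : MarkovChain) (d : ℕ) (hub : M.UniformlyBounded d)
    (γ : ℕ → ℝ) (hdrift : ∀ i, M.drift i = γ i)
    (hpos : ∀ i, 0 < γ i)
    (hsq : Summable fun k => γ k ^ 2)
    (N : ℕ) (hmono : ∀ i j, N ≤ i → i ≤ j → γ j ≤ γ i) :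
    ∀ i, N ≤ i →
      (∑' j : ℕ, (M.p i j).toReal *
          ((∑' k : ℕ, if j ≤ k then γ k ^ 2 else 0) -
           (∑' k : ℕ, if i ≤ k then γ k ^ 2 else 0)))
        ≤ -(γ i ^ 3) +
          (d : ℝ) * ((Finset.Icc (i - d) (i + d)).sup'
            (Finset.nonempty_Icc.mpr (by omega))
            fun k => |γ k ^ 2 - γ i ^ 2|) := by
  intro i hi
  set S : Finset ℕ := Finset.Icc (i - d) (i + d) with hS
  have hiS : i ∈ S := by simp only [hS, Finset.mem_Icc]; omega
  have hne : S.Nonempty := ⟨i, hiS⟩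
  set B : ℝ := S.sup' hne (fun k => |γ k ^ 2 - γ i ^ 2|) with hBdef
  have hB0 : 0 ≤ B := by
    have h := Finset.le_sup' (fun k => |γ k ^ 2 - γ i ^ 2|) hiS
    simp only [sub_self, abs_zero] at h
    exact h
  have hpzero : ∀ j ∉ S, M.p i j = 0 := by
    intro j hj
    have hj' : ¬ (i - d ≤ j ∧ j ≤ i + d) := by simpa [hS, Finset.mem_Icc] using hj
    apply hub
    rw [lt_abs]
    omega
  have hpne : ∀ j, M.p i j ≠ ⊤ := fun j =>
    ne_top_of_le_ne_top ENNReal.one_ne_top ((ENNReal.le_tsum j).trans (M.row_sum i).le)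
  have hp1 : ∑ j ∈ S, (M.p i j).toReal ≤ 1 := by
    rw [← ENNReal.toReal_sum (fun j _ => hpne j)]
    have hle : ∑ j ∈ S, M.p i j ≤ 1 := (ENNReal.sum_le_tsum S).trans (M.row_sum i).le
    calc (∑ j ∈ S, M.p i j).toReal ≤ (1 : ℝ≥0∞).toReal :=
          ENNReal.toReal_mono ENNReal.one_ne_top hle
      _ = 1 := by simp
  -- drift as finite sum
  have hdr : ∑ j ∈ S, (M.p i j).toReal * ((j : ℝ) - i) = γ i := by
    have h := hdrift i
    rw [MarkovChain.drift] at h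
    rw [← h]
    exact (tsum_eq_sum fun j hj => by rw [hpzero j hj]; simp).symm
  -- error terms
  set E : ℕ → ℝ := fun j =>
    (∑ k ∈ Finset.Ico j i, (γ k ^ 2 - γ i ^ 2)) - ∑ k ∈ Finset.Ico i j, (γ k ^ 2 - γ i ^ 2)
    with hEdef
  have hFd : ∀ j : ℕ,
      (∑' k : ℕ, if j ≤ k then γ k ^ 2 else 0) - (∑' k : ℕ, if i ≤ k then γ k ^ 2 else 0)
        = -((j : ℝ) - i) * γ i ^ 2 + E j := by
    intro j
    rw [Fdiff γ hsq i j]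
    have hEj : E j = (∑ k ∈ Finset.Ico j i, (γ k ^ 2 - γ i ^ 2))
        - ∑ k ∈ Finset.Ico i j, (γ k ^ 2 - γ i ^ 2) := rfl
    rw [hEj]
    have c1 : ∑ k ∈ Finset.Ico j i, γ k ^ 2
        = (∑ k ∈ Finset.Ico j i, (γ k ^ 2 - γ i ^ 2)) + ((i - j : ℕ) : ℝ) * γ i ^ 2 := by
      rw [Finset.sum_sub_distrib, Finset.sum_const, Nat.card_Ico, nsmul_eq_mul]
      ring
    have c2 : ∑ k ∈ Finset.Ico i j, γ k ^ 2
        = (∑ k ∈ Finset.Ico i j, (γ k ^ 2 - γ i ^ 2)) + ((j - i : ℕ) : ℝ) * γ i ^ 2 := by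
      rw [Finset.sum_sub_distrib, Finset.sum_const, Nat.card_Ico, nsmul_eq_mul]
      ring
    have hc : ((i - j : ℕ) : ℝ) - ((j - i : ℕ) : ℝ) = (i : ℝ) - j := by
      rcases le_total j i with h | h
      · rw [Nat.sub_eq_zero_of_le h, Nat.cast_sub h]
        push_cast
        ring
      · rw [Nat.sub_eq_zero_of_le h, Nat.cast_sub h]
        push_cast
        ring
    have hc2 : ((i - j : ℕ) : ℝ) * γ i ^ 2 - ((j - i : ℕ) : ℝ) * γ i ^ 2
        = ((i : ℝ) - j) * γ i ^ 2 := by rw [← sub_mul, hc]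
    rw [c1, c2]
    linarith
  have hE : ∀ j ∈ S, |E j| ≤ (d : ℝ) * B := by
    intro j hj
    have hj' : i - d ≤ j ∧ j ≤ i + d := by simpa [hS, Finset.mem_Icc] using hj
    have hk1 : ∀ k ∈ Finset.Ico j i, |γ k ^ 2 - γ i ^ 2| ≤ B := by
      intro k hk
      rw [Finset.mem_Ico] at hk
      exact Finset.le_sup' (fun k => |γ k ^ 2 - γ i ^ 2|)
        (by simp only [hS, Finset.mem_Icc]; omega)
    have hk2 : ∀ k ∈ Finset.Ico i j, |γ k ^ 2 - γ i ^ 2| ≤ B := by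
      intro k hk
      rw [Finset.mem_Ico] at hk
      exact Finset.le_sup' (fun k => |γ k ^ 2 - γ i ^ 2|)
        (by simp only [hS, Finset.mem_Icc]; omega)
    have b1 : |∑ k ∈ Finset.Ico j i, (γ k ^ 2 - γ i ^ 2)| ≤ ((i - j : ℕ) : ℝ) * B := by
      calc |∑ k ∈ Finset.Ico j i, (γ k ^ 2 - γ i ^ 2)|
          ≤ ∑ k ∈ Finset.Ico j i, |γ k ^ 2 - γ i ^ 2| := Finset.abs_sum_le_sum_abs _ _
        _ ≤ (Finset.Ico j i).card • B := Finset.sum_le_card_nsmul _ _ _ hk1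
        _ = ((i - j : ℕ) : ℝ) * B := by rw [nsmul_eq_mul, Nat.card_Ico]
    have b2 : |∑ k ∈ Finset.Ico i j, (γ k ^ 2 - γ i ^ 2)| ≤ ((j - i : ℕ) : ℝ) * B := by
      calc |∑ k ∈ Finset.Ico i j, (γ k ^ 2 - γ i ^ 2)|
          ≤ ∑ k ∈ Finset.Ico i j, |γ k ^ 2 - γ i ^ 2| := Finset.abs_sum_le_sum_abs _ _
        _ ≤ (Finset.Ico i j).card • B := Finset.sum_le_card_nsmul _ _ _ hk2
        _ = ((j - i : ℕ) : ℝ) * B := by rw [nsmul_eq_mul, Nat.card_Ico]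
    have hcard : ((i - j : ℕ) : ℝ) + ((j - i : ℕ) : ℝ) ≤ (d : ℝ) := by
      have : (i - j) + (j - i) ≤ d := by omega
      exact_mod_cast this
    calc |E j| ≤ |∑ k ∈ Finset.Ico j i, (γ k ^ 2 - γ i ^ 2)|
            + |∑ k ∈ Finset.Ico i j, (γ k ^ 2 - γ i ^ 2)| := by
          rw [hEdef]
          exact abs_sub _ _
      _ ≤ ((i - j : ℕ) : ℝ) * B + ((j - i : ℕ) : ℝ) * B := add_le_add b1 b2
      _ = (((i - j : ℕ) : ℝ) + ((j - i : ℕ) : ℝ)) * B := by ring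
      _ ≤ (d : ℝ) * B := mul_le_mul_of_nonneg_right hcard hB0
  have hL : (∑' j : ℕ, (M.p i j).toReal *
        ((∑' k : ℕ, if j ≤ k then γ k ^ 2 else 0) -
         (∑' k : ℕ, if i ≤ k then γ k ^ 2 else 0)))
      = ∑ j ∈ S, (M.p i j).toReal *
        ((∑' k : ℕ, if j ≤ k then γ k ^ 2 else 0) -
         (∑' k : ℕ, if i ≤ k then γ k ^ 2 else 0)) :=
    tsum_eq_sum fun j hj => by rw [hpzero j hj]; simp
  rw [hL]
  have key : ∑ j ∈ S, (M.p i j).toReal *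
        ((∑' k : ℕ, if j ≤ k then γ k ^ 2 else 0) -
         (∑' k : ℕ, if i ≤ k then γ k ^ 2 else 0))
      ≤ -(γ i ^ 3) + (d : ℝ) * B := by
    have step1 : ∑ j ∈ S, (M.p i j).toReal *
          ((∑' k : ℕ, if j ≤ k then γ k ^ 2 else 0) -
           (∑' k : ℕ, if i ≤ k then γ k ^ 2 else 0))
        = -(γ i ^ 2) * (∑ j ∈ S, (M.p i j).toReal * ((j : ℝ) - i))
          + ∑ j ∈ S, (M.p i j).toReal * E j := by
      rw [Finset.mul_sum, ← Finset.sum_add_distrib]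
      refine Finset.sum_congr rfl fun j hj => ?_
      rw [hFd j]
      ring
    have step2 : ∑ j ∈ S, (M.p i j).toReal * E j ≤ (d : ℝ) * B := by
      calc ∑ j ∈ S, (M.p i j).toReal * E j
          ≤ ∑ j ∈ S, (M.p i j).toReal * ((d : ℝ) * B) :=
            Finset.sum_le_sum fun j hj => mul_le_mul_of_nonneg_left
              ((le_abs_self _).trans (hE j hj)) ENNReal.toReal_nonneg
        _ = (∑ j ∈ S, (M.p i j).toReal) * ((d : ℝ) * B) := by rw [Finset.sum_mul]
        _ ≤ 1 * ((d : ℝ) * B) := mul_le_mul_of_nonneg_right hp1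
              (mul_nonneg (Nat.cast_nonneg d) hB0)
        _ = (d : ℝ) * B := one_mul _
    rw [step1, hdr]
    nlinarith [hpos i, sq_nonneg (γ i)]
  exact key
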